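/- Given a chain of subtoposes E ⊆ E' ⊆ E'' of toposes (composable geometric embeddings f : E → E' and g : E' → E''), if the composed inclusion E ⊆ E'' is essential (i.e., (f ≫ g)* has a left adjoint), then the inclusion E ⊆ E' is essential. -/

import Mathlib

open CategoryTheory

universe u₁ u₂ u₃ v₁ v₂ v₃

/-- Given a chain of geometric embeddings, formalized via adjunctions
`fInv ⊣ fDir` and `gInv ⊣ gDir` with fully faithful direct images, if the composed inclusion
is essential (the composite inverse image `gInv ⋙ fInv` has a left adjoint), then the first
inclusion is essential (`fInv` has a left adjoint). -/
theorem stmt7 {E : Type u₁} {E' : Type u₂} {E'' : Type u₃}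
    [Category.{v₁} E] [Category.{v₂} E'] [Category.{v₃} E'']
    (fInv : E' ⥤ E) (fDir : E ⥤ E') (gInv : E'' ⥤ E') (gDir : E' ⥤ E'')
    (adjf : fInv ⊣ fDir) (adjg : gInv ⊣ gDir)
    [fDir.Full] [fDir.Faithful] [gDir.Full] [gDir.Faithful]
    [(gInv ⋙ fInv).IsRightAdjoint] :
    fInv.IsRightAdjoint := by
  let L := (gInv ⋙ fInv).leftAdjoint
  let adjL : L ⊣ gInv ⋙ fInv := Adjunction.ofIsRightAdjoint _
  have : IsIso adjg.counit := adjg.counit_isIso_of_R_fully_faithful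
  let e : gDir ⋙ gInv ⋙ fInv ≅ fInv :=
    (Functor.associator _ _ _).symm ≪≫
      Functor.isoWhiskerRight (asIso adjg.counit) fInv ≪≫ fInv.leftUnitor
  exact ⟨L ⋙ gInv, ⟨((adjL.comp adjg).ofNatIsoRight e)⟩⟩
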